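/- Let n > 0 and K > 0 be real numbers and q > K/n. Then the function g(λ) = K·log(1 + (n/K)λ) − nλq/(K/n + λ), defined for λ ∈ [0, ∞), attains its minimum over [0, ∞) uniquely at λ = q − K/n; that is, g is strictly decreasing on [0, q − K/n] and strictly increasing on [q − K/n, ∞). -/

import Mathlib

open Set

/-- `g(λ) = K·log(1 + (n/K)λ) − nλq/(K/n + λ)` attains its minimum on
`[0,∞)` uniquely at `λ = q − K/n`: it is strictly decreasing on `[0, q − K/n]` and
strictly increasing on `[q − K/n, ∞)`. -/
theorem stmt_5 (n K q : ℝ) (hn : 0 < n) (hK : 0 < K) (hq : K / n < q) :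
    StrictAntiOn (fun lam : ℝ => K * Real.log (1 + (n / K) * lam) -
        n * lam * q / (K / n + lam)) (Icc 0 (q - K / n)) ∧
    StrictMonoOn (fun lam : ℝ => K * Real.log (1 + (n / K) * lam) -
        n * lam * q / (K / n + lam)) (Ici (q - K / n)) ∧
    (∀ lam ∈ Ici (0 : ℝ), lam ≠ q - K / n →
      K * Real.log (1 + (n / K) * (q - K / n)) -
          n * (q - K / n) * q / (K / n + (q - K / n)) <
        K * Real.log (1 + (n / K) * lam) - n * lam * q / (K / n + lam)) := by
  have hc : 0 < K / n := div_pos hK hn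
  have hqc : 0 < q - K / n := sub_pos.mpr hq
  have key : ∀ x : ℝ, 0 ≤ x →
      HasDerivAt (fun lam : ℝ => K * Real.log (1 + (n / K) * lam) -
        n * lam * q / (K / n + lam))
        (n * (K / n) * (x - (q - K / n)) / (K / n + x) ^ 2) x := by
    intro x hx
    have hcx : 0 < K / n + x := by linarith
    have h1 : (0:ℝ) < 1 + (n / K) * x := by
      have : 0 ≤ (n / K) * x := mul_nonneg (div_pos hn hK).le hx
      linarith
    have d1 : HasDerivAt (fun y : ℝ => 1 + (n / K) * y) (n / K) x := by
      simpa using ((hasDerivAt_id x).const_mul (n / K)).const_add 1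
    have d2 := (d1.log (ne_of_gt h1)).const_mul K
    have d3 : HasDerivAt (fun y : ℝ => n * y * q) (n * q) x := by
      simpa using ((hasDerivAt_id x).const_mul n).mul_const q
    have d4 : HasDerivAt (fun y : ℝ => K / n + y) 1 x := by
      simpa using (hasDerivAt_id x).const_add (K / n)
    have d5 := d3.div d4 (ne_of_gt hcx)
    have d6 := d2.sub d5
    refine HasDerivAt.congr_deriv d6 ?_
    field_simp
    ring
  have anti : StrictAntiOn (fun lam : ℝ => K * Real.log (1 + (n / K) * lam) -
      n * lam * q / (K / n + lam)) (Icc 0 (q - K / n)) := by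
    apply strictAntiOn_of_deriv_neg (convex_Icc _ _)
    · intro x hx
      exact (key x hx.1).continuousAt.continuousWithinAt
    · intro x hx
      rw [interior_Icc] at hx
      rw [(key x hx.1.le).deriv]
      apply div_neg_of_neg_of_pos
      · exact mul_neg_of_pos_of_neg (mul_pos hn hc) (by linarith [hx.2])
      · exact pow_pos (by linarith [hx.1]) 2
  have mono : StrictMonoOn (fun lam : ℝ => K * Real.log (1 + (n / K) * lam) -
      n * lam * q / (K / n + lam)) (Ici (q - K / n)) := by
    apply strictMonoOn_of_deriv_pos (convex_Ici _)
    · intro x hx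
      exact (key x (by simp only [mem_Ici] at hx; linarith)).continuousAt.continuousWithinAt
    · intro x hx
      rw [interior_Ici] at hx
      have hx' : q - K / n < x := hx
      rw [(key x (by linarith)).deriv]
      apply div_pos
      · exact mul_pos (mul_pos hn hc) (by linarith)
      · exact pow_pos (by linarith) 2
  refine ⟨anti, mono, ?_⟩
  intro lam hlam hne
  rcases lt_or_gt_of_ne hne with h | h
  · simpa using anti ⟨hlam, h.le⟩ ⟨hqc.le, le_refl _⟩ h
  · simpa using mono (self_mem_Ici) h.le h
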